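/- Let C be a delay-free (n,k,δ) convolutional code. If d_j^c(C) = (n−k)(j+1)+1 for some j, then d_i^c(C) = (n−k)(i+1)+1 for all i ≤ j. In other words, attaining the generalized Singleton column-distance bound at index j forces it at all smaller indices. -/

import Mathlib

open Polynomial Matrix

noncomputable def wtTrunc {F : Type*} [Field F] {n : ℕ} (j : ℕ)
    (v : Fin n → Polynomial F) : ℕ :=
  {p : ℕ × Fin n | p.1 ≤ j ∧ (v p.2).coeff p.1 ≠ 0}.ncard

noncomputable def wtFull {F : Type*} [Field F] {n : ℕ} (v : Fin n → Polynomial F) : ℕ :=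
  {p : ℕ × Fin n | (v p.2).coeff p.1 ≠ 0}.ncard

noncomputable def colDist {F : Type*} [Field F] {n : ℕ}
    (C : Submodule (Polynomial F) (Fin n → Polynomial F)) (j : ℕ) : ℕ :=
  sInf {w | ∃ v ∈ C, (fun t => (v t).coeff 0) ≠ (0 : Fin n → F) ∧ w = wtTrunc j v}

noncomputable def freeDist {F : Type*} [Field F] {n : ℕ}
    (C : Submodule (Polynomial F) (Fin n → Polynomial F)) : ℕ :=
  sInf {w | ∃ v ∈ C, v ≠ 0 ∧ w = wtFull v}

def IsEncoder {F : Type*} [Field F] {k n : ℕ}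
    (C : Submodule (Polynomial F) (Fin n → Polynomial F))
    (G : Matrix (Fin k) (Fin n) (Polynomial F)) : Prop :=
  LinearIndependent (Polynomial F) (fun i : Fin k => fun t => G i t) ∧
    Submodule.span (Polynomial F) (Set.range (fun i : Fin k => fun t => G i t)) = C

def IsDelayFree {F : Type*} [Field F] {k n : ℕ}
    (G : Matrix (Fin k) (Fin n) (Polynomial F)) : Prop :=
  LinearIndependent F (fun i : Fin k => fun t => (G i t).coeff 0)

noncomputable def codeDegree {F : Type*} [Field F] {k n : ℕ}
    (G : Matrix (Fin k) (Fin n) (Polynomial F)) : ℕ :=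
  Finset.univ.sup fun φ : Fin k → Fin n => ((G.submatrix id φ).det).natDegree

noncomputable def rowDegSum {F : Type*} [Field F] {k n : ℕ}
    (G : Matrix (Fin k) (Fin n) (Polynomial F)) : ℕ :=
  ∑ i : Fin k, Finset.univ.sup fun t : Fin n => (G i t).natDegree

noncomputable def Gcoeff {F : Type*} [Field F] {k n : ℕ}
    (G : Matrix (Fin k) (Fin n) (Polynomial F)) (i : ℕ) : Matrix (Fin k) (Fin n) F :=
  fun a b => (G a b).coeff i

section Aux

open scoped Classical

variable {F : Type*} [Field F] {n k : ℕ}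

/-- Existence of pivot columns with a solver for the constant-term matrix. -/
lemma exists_sol9 (G : Matrix (Fin k) (Fin n) (Polynomial F))
    (hdf : LinearIndependent F (fun i : Fin k => fun t => (G i t).coeff 0)) :
    ∃ φ : Fin k → Fin n, Function.Injective φ ∧
      ∀ w : Fin k → F, ∃ u : Fin k → F, ∀ a, ∑ b, u b * (G b (φ a)).coeff 0 = w a := by
  classical
  set V := Fin k → F
  set f : Fin n → Module.Dual F V := fun t => ∑ a : Fin k, ((G a t).coeff 0) • LinearMap.proj a
  have hf_apply : ∀ t u, f t u = ∑ a : Fin k, u a * (G a t).coeff 0 := by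
    intro t u
    simp only [f, LinearMap.sum_apply, LinearMap.smul_apply, LinearMap.proj_apply, smul_eq_mul]
    exact Finset.sum_congr rfl (fun a _ => mul_comm _ _)
  have hsep : ∀ z : V, z ≠ 0 → ∃ g ∈ Set.range f, g z ≠ 0 := by
    intro z hz
    by_contra hcon
    push_neg at hcon
    have h0 : ∀ t : Fin n, f t z = 0 := fun t => hcon _ ⟨t, rfl⟩
    have : ∑ a : Fin k, z a • (fun t => (G a t).coeff 0) = (0 : Fin n → F) := by
      funext t
      have := h0 t
      rw [hf_apply] at this
      simpa [mul_comm] using this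
    have := Fintype.linearIndependent_iff.mp hdf z this
    exact hz (funext this)
  have hspan : Submodule.span F (Set.range f) = ⊤ :=
    Submodule.span_eq_top_of_ne_zero (fun z hz => hsep z hz)
  obtain ⟨b, hbsub, hbspan, hbind⟩ := exists_linearIndependent F (Set.range f)
  have hbtop : Submodule.span F b = ⊤ := hbspan.trans hspan
  have hfin : b.Finite := (Set.finite_range f).subset hbsub
  have : Fintype b := hfin.fintype
  let B : Module.Basis b F (Module.Dual F V) := Module.Basis.mk hbind (by rw [Subtype.range_coe, hbtop])
  have hcard : Fintype.card b = k := by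
    have := Module.finrank_eq_card_basis B
    rw [Subspace.dual_finrank_eq] at this
    simp [V] at this
    have h2 := Nat.card_coe_set_eq b
    rw [Nat.card_eq_fintype_card] at h2
    omega
  let e : Fin k ≃ b := (Fintype.equivFinOfCardEq hcard).symm
  have hpick : ∀ a : Fin k, ∃ t : Fin n, f t = (e a : Module.Dual F V) := fun a =>
    hbsub (e a).2
  choose φ hφ using hpick
  have hinj : Function.Injective φ := by
    intro a a' h
    have : (e a : Module.Dual F V) = (e a' : Module.Dual F V) := by
      rw [← hφ a, ← hφ a', h]
    exact e.injective (Subtype.ext this)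
  let Ψ : V →ₗ[F] V := LinearMap.pi (fun a => f (φ a))
  have hΨinj : Function.Injective Ψ := by
    rw [← LinearMap.ker_eq_bot]
    rw [Submodule.eq_bot_iff]
    intro u hu
    have hu' : ∀ a : Fin k, f (φ a) u = 0 := fun a => congrFun hu a
    by_contra hne
    obtain ⟨g, hg, hgz⟩ := hsep u hne
    have hall : ∀ g : Module.Dual F V, g u = 0 := by
      intro g
      have hg' : g ∈ Submodule.span F b := by rw [hbtop]; trivial
      induction hg' using Submodule.span_induction with
      | mem x hx =>
          obtain ⟨a, ha⟩ := e.surjective ⟨x, hx⟩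
          have : f (φ a) = x := by rw [hφ a, ha]
          rw [← this]; exact hu' a
      | zero => simp
      | add x y _ _ hx hy => simp [hx, hy]
      | smul c x _ hx => simp [hx]
    exact hgz (hall g)
  have hΨsurj : Function.Surjective Ψ :=
    (LinearMap.injective_iff_surjective).mp hΨinj
  refine ⟨φ, hinj, fun w => ?_⟩
  obtain ⟨u, hu⟩ := hΨsurj w
  exact ⟨u, fun a => by rw [← hf_apply]; exact congrFun hu a⟩

noncomputable def out9 (G : Matrix (Fin k) (Fin n) (Polynomial F))
    (U : ℕ → Fin k → F) (m : ℕ) (t : Fin n) : F :=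
  ∑ l ∈ Finset.range (m+1), ∑ b, U l b * (G b t).coeff (m - l)

noncomputable def pOf9 (U : ℕ → Fin k → F) (N : ℕ) (a : Fin k) : Polynomial F :=
  ∑ l ∈ Finset.range (N+1), Polynomial.monomial l (U l a)

noncomputable def vOf9 (G : Matrix (Fin k) (Fin n) (Polynomial F))
    (p : Fin k → Polynomial F) : Fin n → Polynomial F := fun t => ∑ a, p a * G a t

lemma coeff_pOf9 (U : ℕ → Fin k → F) (N : ℕ) (a : Fin k) (l : ℕ) :
    (pOf9 U N a).coeff l = if l ≤ N then U l a else 0 := by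
  classical
  rw [pOf9, Polynomial.finset_sum_coeff]
  simp only [Polynomial.coeff_monomial]
  rw [Finset.sum_ite_eq' (Finset.range (N+1)) l (fun l' => U l' a)]
  simp [Nat.lt_succ_iff]

lemma coeff_vOf9 (G : Matrix (Fin k) (Fin n) (Polynomial F))
    (p : Fin k → Polynomial F) (t : Fin n) (m : ℕ) :
    (vOf9 G p t).coeff m = out9 G (fun l a => (p a).coeff l) m t := by
  rw [vOf9, Polynomial.finset_sum_coeff, out9, Finset.sum_comm]
  refine Finset.sum_congr rfl (fun a _ => ?_)
  rw [Polynomial.coeff_mul, Finset.Nat.sum_antidiagonal_eq_sum_range_succ_mk]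

lemma vOf9_mem {C : Submodule (Polynomial F) (Fin n → Polynomial F)}
    {G : Matrix (Fin k) (Fin n) (Polynomial F)}
    (hG : Submodule.span (Polynomial F) (Set.range (fun i : Fin k => fun t => G i t)) = C)
    (p : Fin k → Polynomial F) : vOf9 G p ∈ C := by
  rw [← hG]
  have : vOf9 G p = ∑ a, p a • (fun t => G a t) := by
    funext t; simp [vOf9]
  rw [this]
  exact Submodule.sum_mem _ (fun a _ => Submodule.smul_mem _ _
    (Submodule.subset_span (Set.mem_range_self a)))

lemma mem_decomp9 {C : Submodule (Polynomial F) (Fin n → Polynomial F)}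
    {G : Matrix (Fin k) (Fin n) (Polynomial F)}
    (hG : Submodule.span (Polynomial F) (Set.range (fun i : Fin k => fun t => G i t)) = C)
    {v : Fin n → Polynomial F} (hv : v ∈ C) : ∃ p : Fin k → Polynomial F, vOf9 G p = v := by
  rw [← hG, Submodule.mem_span_range_iff_exists_fun] at hv
  obtain ⟨c, hc⟩ := hv
  exact ⟨c, by funext t; simpa [vOf9] using congrFun hc t⟩

lemma wtTrunc_eq_sum (j : ℕ) (v : Fin n → Polynomial F) :
    wtTrunc j v = ∑ m ∈ Finset.range (j+1),
      (Finset.univ.filter fun t => (v t).coeff m ≠ 0).card := by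
  classical
  rw [wtTrunc]
  have : {p : ℕ × Fin n | p.1 ≤ j ∧ (v p.2).coeff p.1 ≠ 0} =
      ↑((Finset.range (j+1) ×ˢ Finset.univ).filter fun p => (v p.2).coeff p.1 ≠ 0) := by
    ext p
    simp [Nat.lt_succ_iff]
  rw [this, Set.ncard_coe_finset]
  rw [Finset.card_filter, Finset.sum_product]
  refine Finset.sum_congr rfl (fun m _ => ?_)
  rw [Finset.card_filter]

noncomputable def extMsg (G : Matrix (Fin k) (Fin n) (Polynomial F))
    (φ : Fin k → Fin n) (sol : (Fin k → F) → Fin k → F) (i : ℕ)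
    (U : ℕ → Fin k → F) : ℕ → Fin k → F
  | l => if l ≤ i then U l else
      sol (fun a => - ∑ l' ∈ (Finset.range l).attach,
        ∑ b, extMsg G φ sol i U l'.1 b * (G b (φ a)).coeff (l - l'.1))
  decreasing_by exact Finset.mem_range.mp l'.2

lemma extMsg_le (G : Matrix (Fin k) (Fin n) (Polynomial F))
    (φ : Fin k → Fin n) (sol : (Fin k → F) → Fin k → F) (i : ℕ)
    (U : ℕ → Fin k → F) {l : ℕ} (hl : l ≤ i) : extMsg G φ sol i U l = U l := by
  rw [extMsg]
  simp [hl]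

lemma out9_congr (G : Matrix (Fin k) (Fin n) (Polynomial F))
    {U U' : ℕ → Fin k → F} {m : ℕ} (h : ∀ l ≤ m, U l = U' l) (t : Fin n) :
    out9 G U m t = out9 G U' m t := by
  refine Finset.sum_congr rfl (fun l hl => ?_)
  rw [h l (Finset.mem_range_succ_iff.mp hl)]

lemma out9_ext_eq_zero (G : Matrix (Fin k) (Fin n) (Polynomial F))
    (φ : Fin k → Fin n) (sol : (Fin k → F) → Fin k → F)
    (hsol : ∀ w a, ∑ b, sol w b * (G b (φ a)).coeff 0 = w a)
    (i : ℕ) (U : ℕ → Fin k → F) {m : ℕ} (hm : i < m) (a : Fin k) :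
    out9 G (extMsg G φ sol i U) m (φ a) = 0 := by
  rw [out9, Finset.sum_range_succ]
  have h1 : extMsg G φ sol i U m = sol (fun a => - ∑ l' ∈ (Finset.range m).attach,
      ∑ b, extMsg G φ sol i U l'.1 b * (G b (φ a)).coeff (m - l'.1)) := by
    rw [extMsg]
    simp [Nat.not_le.mpr hm]
  rw [h1, Nat.sub_self, hsol]
  rw [Finset.sum_attach (Finset.range m)
    (fun l' => ∑ b, extMsg G φ sol i U l' b * (G b (φ a)).coeff (m - l'))]
  ring

lemma row_card_le (hkn : k ≤ n) {φ : Fin k → Fin n} (hinj : Function.Injective φ)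
    {g : Fin n → F} (hg : ∀ a, g (φ a) = 0) :
    (Finset.univ.filter fun t => g t ≠ 0).card ≤ n - k := by
  classical
  have hsub : (Finset.univ.filter fun t => g t ≠ 0) ⊆
      Finset.univ \ Finset.image φ Finset.univ := by
    intro t ht
    simp only [Finset.mem_filter, Finset.mem_univ, true_and] at ht
    simp only [Finset.mem_sdiff, Finset.mem_univ, true_and, Finset.mem_image, not_exists]
    rintro a ⟨-, rfl⟩
    exact ht (hg a)
  calc (Finset.univ.filter fun t => g t ≠ 0).card
      ≤ (Finset.univ \ Finset.image φ Finset.univ).card := Finset.card_le_card hsub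
    _ = n - k := by
        rw [Finset.card_sdiff_of_subset (Finset.subset_univ _), Finset.card_image_of_injective _ hinj]
        simp

lemma row_card_le_one (hkn : k ≤ n) {φ : Fin k → Fin n} (hinj : Function.Injective φ)
    (a0 : Fin k) {g : Fin n → F} (hg : ∀ a, a ≠ a0 → g (φ a) = 0) :
    (Finset.univ.filter fun t => g t ≠ 0).card ≤ n - k + 1 := by
  classical
  have hsub : (Finset.univ.filter fun t => g t ≠ 0) ⊆
      (Finset.univ \ Finset.image φ Finset.univ) ∪ {φ a0} := by
    intro t ht
    simp only [Finset.mem_filter, Finset.mem_univ, true_and] at ht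
    rw [Finset.mem_union]
    by_cases h : ∃ a, φ a = t
    · obtain ⟨a, rfl⟩ := h
      by_cases ha : a = a0
      · subst ha; right; simp
      · exact absurd (hg a ha) ht
    · left
      simp only [Finset.mem_sdiff, Finset.mem_univ, true_and, Finset.mem_image]
      push_neg at h ⊢
      intro a ha
      exact h a ha
  calc (Finset.univ.filter fun t => g t ≠ 0).card
      ≤ ((Finset.univ \ Finset.image φ Finset.univ) ∪ {φ a0}).card := Finset.card_le_card hsub
    _ ≤ (Finset.univ \ Finset.image φ Finset.univ).card + 1 :=
        le_trans (Finset.card_union_le _ _) (by simp)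
    _ ≤ n - k + 1 := by
        rw [Finset.card_sdiff_of_subset (Finset.subset_univ _), Finset.card_image_of_injective _ hinj]
        simp

end Aux

theorem stmt9 {F : Type*} [Field F] [Fintype F] {n k δ : ℕ} (hkn : k ≤ n)
    (C : Submodule (Polynomial F) (Fin n → Polynomial F))
    (G : Matrix (Fin k) (Fin n) (Polynomial F))
    (hG : IsEncoder C G) (hdf : IsDelayFree G) (hdeg : codeDegree G = δ)
    (j : ℕ) (hj : colDist C j = (n - k) * (j + 1) + 1) :
    ∀ i ≤ j, colDist C i = (n - k) * (i + 1) + 1 := by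
  classical
  intro i hij
  -- dispose of k = 0
  rcases Nat.eq_zero_or_pos k with hk0 | hkpos
  · exfalso
    subst hk0
    have hbot : C = ⊥ := by
      rw [← hG.2]
      have : (Set.range (fun i : Fin 0 => fun t => G i t)) = ∅ := by
        simp
      rw [this, Submodule.span_empty]
    have hempty : {w | ∃ v ∈ C, (fun t => (v t).coeff 0) ≠ (0 : Fin n → F) ∧ w = wtTrunc j v}
        = (∅ : Set ℕ) := by
      ext w
      simp only [Set.mem_setOf_eq, Set.mem_empty_iff_false, iff_false, not_exists]
      rintro v ⟨hv, hne, -⟩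
      rw [hbot, Submodule.mem_bot] at hv
      subst hv
      exact hne (by funext t; simp)
    rw [colDist, hempty, Nat.sInf_empty] at hj
    omega
  obtain ⟨φ, hφinj, hsolex⟩ := exists_sol9 G hdf
  choose sol hsol using hsolex
  set q := n - k with hq
  set a0 : Fin k := ⟨0, hkpos⟩
  -- Lemma A : a witness of weight ≤ q*(i+1)+1 at any index i'
  have lemA : ∀ i' : ℕ, ∃ v ∈ C, (fun t => (v t).coeff 0) ≠ (0 : Fin n → F) ∧
      wtTrunc i' v ≤ q * (i' + 1) + 1 := by
    intro i'
    set U : ℕ → Fin k → F := fun l => if l = 0 then sol (Pi.single a0 1) else 0 with hU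
    set U' := extMsg G φ sol 0 U with hU'
    set p := pOf9 U' i' with hp
    set v := vOf9 G p with hv
    have hU'0 : U' 0 = sol (Pi.single a0 1) := by
      rw [hU', extMsg_le G φ sol 0 U (le_refl 0), hU]; simp
    have hcoeff : ∀ m ≤ i', ∀ t, (v t).coeff m = out9 G U' m t := by
      intro m hm t
      rw [hv, coeff_vOf9]
      refine out9_congr G (fun l hl => ?_) t
      funext a
      rw [hp, coeff_pOf9]
      simp [Nat.le_trans hl hm, hU']
    have hcoeff0 : ∀ t, (v t).coeff 0 = ∑ b, (sol (Pi.single a0 1)) b * (G b t).coeff 0 := by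
      intro t
      rw [hcoeff 0 (Nat.zero_le _) t, out9]
      simp [hU'0]
    refine ⟨v, vOf9_mem hG.2 p, ?_, ?_⟩
    · intro hzero
      have := congrFun hzero (φ a0)
      rw [hcoeff0] at this
      rw [hsol (Pi.single a0 1) a0] at this
      simp at this
    · rw [wtTrunc_eq_sum]
      have hbound : ∀ m ∈ Finset.range (i'+1),
          (Finset.univ.filter fun t => (v t).coeff m ≠ 0).card ≤
            if m = 0 then q + 1 else q := by
        intro m hm
        rw [Finset.mem_range, Nat.lt_succ_iff] at hm
        by_cases hm0 : m = 0
        · subst hm0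
          simp only [if_pos rfl]
          refine row_card_le_one hkn hφinj a0 (fun a ha => ?_)
          rw [hcoeff0, hsol (Pi.single a0 1) a]
          simp [Pi.single_apply, ha]
        · simp only [if_neg hm0]
          refine row_card_le hkn hφinj (fun a => ?_)
          rw [hcoeff m hm _]
          exact out9_ext_eq_zero G φ sol hsol 0 U (Nat.pos_of_ne_zero hm0) a
      calc ∑ m ∈ Finset.range (i'+1), (Finset.univ.filter fun t => (v t).coeff m ≠ 0).card
          ≤ ∑ m ∈ Finset.range (i'+1), if m = 0 then q + 1 else q :=
            Finset.sum_le_sum hbound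
        _ = q * (i' + 1) + 1 := by
            have hsp : ∀ m, (if m = 0 then q + 1 else q) = q + (if m = 0 then 1 else 0) := by
              intro m; split <;> simp
            simp_rw [hsp]
            rw [Finset.sum_add_distrib, Finset.sum_const, Finset.card_range, smul_eq_mul,
              Finset.sum_ite_eq' (Finset.range (i'+1)) 0 (fun _ => 1)]
            simp [Nat.mul_comm]
  -- upper bound
  have hub : colDist C i ≤ q * (i + 1) + 1 := by
    obtain ⟨v, hvC, hvne, hvw⟩ := lemA i
    exact le_trans (Nat.sInf_le ⟨v, hvC, hvne, rfl⟩) hvw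
  -- the set at index i is nonempty, take a minimizer
  have hne : {w | ∃ v ∈ C, (fun t => (v t).coeff 0) ≠ (0 : Fin n → F) ∧ w = wtTrunc i v}.Nonempty := by
    obtain ⟨v, hvC, hvne, -⟩ := lemA i
    exact ⟨wtTrunc i v, v, hvC, hvne, rfl⟩
  obtain ⟨v, hvC, hvne, hvw⟩ := Nat.sInf_mem hne
  -- Lemma B : extend v to a codeword of weight ≤ colDist C i + q * (j - i) on [0,j]
  obtain ⟨p, hpv⟩ := mem_decomp9 hG.2 hvC
  set U : ℕ → Fin k → F := fun l a => (p a).coeff l with hU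
  set U' := extMsg G φ sol i U with hU'
  set p' := pOf9 U' j with hp'
  set v' := vOf9 G p' with hv'
  have hcoeff' : ∀ m ≤ j, ∀ t, (v' t).coeff m = out9 G U' m t := by
    intro m hm t
    rw [hv', coeff_vOf9]
    refine out9_congr G (fun l hl => ?_) t
    funext a
    rw [hp', coeff_pOf9]
    simp [Nat.le_trans hl hm, hU']
  have hagree : ∀ m ≤ i, ∀ t, (v' t).coeff m = (v t).coeff m := by
    intro m hm t
    rw [hcoeff' m (le_trans hm hij) t, ← hpv, coeff_vOf9]
    refine (out9_congr G (fun l hl => ?_) t).symm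
    funext a
    rw [hU', extMsg_le G φ sol i U (le_trans hl hm)]
  have hv'ne : (fun t => (v' t).coeff 0) ≠ (0 : Fin n → F) := by
    intro hzero
    apply hvne
    funext t
    rw [← hagree 0 (Nat.zero_le _) t]
    exact congrFun hzero t
  have hwt : wtTrunc j v' ≤ wtTrunc i v + q * (j - i) := by
    rw [wtTrunc_eq_sum, wtTrunc_eq_sum]
    have hsplit : Finset.range (j+1) = Finset.range (i+1) ∪ Finset.Ico (i+1) (j+1) := by
      simp only [Finset.range_eq_Ico]
      exact (Finset.Ico_union_Ico_eq_Ico (Nat.zero_le _) (Nat.succ_le_succ hij)).symm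
    rw [hsplit, Finset.sum_union (by
      rw [Finset.range_eq_Ico]
      exact Finset.Ico_disjoint_Ico_consecutive 0 (i+1) (j+1))]
    have h1 : ∑ m ∈ Finset.range (i+1), (Finset.univ.filter fun t => (v' t).coeff m ≠ 0).card
        = ∑ m ∈ Finset.range (i+1), (Finset.univ.filter fun t => (v t).coeff m ≠ 0).card := by
      refine Finset.sum_congr rfl (fun m hm => ?_)
      rw [Finset.mem_range, Nat.lt_succ_iff] at hm
      congr 1
      ext t
      simp [hagree m hm t]
    have h2 : ∑ m ∈ Finset.Ico (i+1) (j+1),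
        (Finset.univ.filter fun t => (v' t).coeff m ≠ 0).card ≤ q * (j - i) := by
      calc ∑ m ∈ Finset.Ico (i+1) (j+1), (Finset.univ.filter fun t => (v' t).coeff m ≠ 0).card
          ≤ ∑ _m ∈ Finset.Ico (i+1) (j+1), q := by
            refine Finset.sum_le_sum (fun m hm => ?_)
            rw [Finset.mem_Ico] at hm
            refine row_card_le hkn hφinj (fun a => ?_)
            rw [hcoeff' m (Nat.lt_succ_iff.mp hm.2) _]
            exact out9_ext_eq_zero G φ sol hsol i U hm.1 a
        _ = q * (j - i) := by
            rw [Finset.sum_const, Nat.card_Ico, smul_eq_mul, Nat.succ_sub_succ, Nat.mul_comm]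
    rw [h1]
    exact Nat.add_le_add_left h2 _
  -- conclude
  have hjle : (n - k) * (j + 1) + 1 ≤ colDist C i + q * (j - i) := by
    rw [← hj]
    exact le_trans (Nat.sInf_le ⟨v', vOf9_mem hG.2 p', hv'ne, rfl⟩) (by rw [← hvw] at hwt; exact hwt)
  have harith : q * (j + 1) = q * (j - i) + q * (i + 1) := by
    rw [← Nat.mul_add, ← Nat.add_assoc, Nat.sub_add_cancel hij]
  rw [harith] at hjle
  have h3 : q * (j - i) + (q * (i + 1) + 1) ≤ q * (j - i) + colDist C i := by
    calc q * (j - i) + (q * (i + 1) + 1) = q * (j - i) + q * (i + 1) + 1 := by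
          rw [Nat.add_assoc]
      _ ≤ colDist C i + q * (j - i) := hjle
      _ = q * (j - i) + colDist C i := Nat.add_comm _ _
  exact le_antisymm hub (Nat.le_of_add_le_add_left h3)
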